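/- Let X₁, …, Xₙ be i.i.d. real-valued random variables with common distribution D having CDF F, let γ ∈ (0, 1/2) and β ∈ (0,1). Define the population quantile q_τ := inf{x : F(x) ≥ τ} and the empirical quantile q̂_γ := inf{x : #{i : Xᵢ ≤ x} ≥ γ·n}. If n ≥ (1/(2γ²))·log(1/β), then Pr( q̂_γ > q_{2γ} ) ≤ β. -/

import Mathlib

open MeasureTheory ProbabilityTheory

/-- The CDF of a distribution `D` on `ℝ`. -/
noncomputable def distCdf (D : Measure ℝ) (x : ℝ) : ℝ := (D (Set.Iic x)).toReal

/-- The population `τ`-quantile `q_τ := inf {x : F(x) ≥ τ}`. -/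
noncomputable def popQuantile (D : Measure ℝ) (τ : ℝ) : ℝ :=
  sInf {x : ℝ | τ ≤ distCdf D x}

/-- The empirical `γ`-quantile `q̂_γ := inf {x : #{i : Xᵢ ≤ x} ≥ γ·n}`. -/
noncomputable def empQuantile {n : ℕ} (X : Fin n → ℝ) (γ : ℝ) : ℝ :=
  sInf {x : ℝ | γ * (n : ℝ) ≤ ((Finset.univ.filter (fun i => X i ≤ x)).card : ℝ)}

lemma bern_h_pos (p : ℝ) (hp0 : 0 ≤ p) (hp1 : p ≤ 1) (s : ℝ) :
    0 < 1 - p + p * Real.exp s := by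
  rcases eq_or_lt_of_le hp1 with h1 | h1
  · rw [← h1]; simp; positivity
  · have : 0 ≤ p * Real.exp s := mul_nonneg hp0 (Real.exp_pos s).le
    linarith

/-- Hoeffding's lemma for the Bernoulli mgf, for `t ≤ 0`. -/
lemma bern_mgf_bound (p t : ℝ) (hp0 : 0 ≤ p) (hp1 : p ≤ 1) (ht : t ≤ 0) :
    1 - p + p * Real.exp t ≤ Real.exp (p * t + t ^ 2 / 8) := by
  set φ : ℝ → ℝ := fun s => p + s / 4 - p * Real.exp s / (1 - p + p * Real.exp s) with hφ
  set g : ℝ → ℝ := fun s => p * s + s ^ 2 / 8 - Real.log (1 - p + p * Real.exp s) with hg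
  have hpos := bern_h_pos p hp0 hp1
  have hφd : ∀ s : ℝ, HasDerivAt φ
      (1 / 4 - (p * Real.exp s * (1 - p + p * Real.exp s)
        - p * Real.exp s * (p * Real.exp s)) / (1 - p + p * Real.exp s) ^ 2) s := by
    intro s
    have h1 : HasDerivAt (fun s : ℝ => 1 - p + p * Real.exp s) (p * Real.exp s) s :=
      ((Real.hasDerivAt_exp s).const_mul p).const_add (1 - p)
    have h2 : HasDerivAt (fun s : ℝ => p * Real.exp s) (p * Real.exp s) s :=
      (Real.hasDerivAt_exp s).const_mul p
    have h3 : HasDerivAt (fun s : ℝ => p * Real.exp s / (1 - p + p * Real.exp s))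
        ((p * Real.exp s * (1 - p + p * Real.exp s)
          - p * Real.exp s * (p * Real.exp s)) / (1 - p + p * Real.exp s) ^ 2) s :=
      h2.div h1 (hpos s).ne'
    have h4 : HasDerivAt (fun s : ℝ => p + s / 4) (1 / 4) s := by
      simpa using ((hasDerivAt_id s).div_const 4).const_add p
    exact h4.sub h3
  have hgd : ∀ s : ℝ, HasDerivAt g (φ s) s := by
    intro s
    have h1 : HasDerivAt (fun s : ℝ => 1 - p + p * Real.exp s) (p * Real.exp s) s :=
      ((Real.hasDerivAt_exp s).const_mul p).const_add (1 - p)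
    have h2 : HasDerivAt (fun s : ℝ => Real.log (1 - p + p * Real.exp s))
        (p * Real.exp s / (1 - p + p * Real.exp s)) s := h1.log (hpos s).ne'
    have h3 : HasDerivAt (fun s : ℝ => p * s + s ^ 2 / 8) (p + s / 4) s := by
      have h4 : HasDerivAt (fun s : ℝ => p * s) p s := by
        simpa using (hasDerivAt_id s).const_mul p
      have h5 : HasDerivAt (fun s : ℝ => s ^ 2 / 8) (s / 4) s := by
        have := (hasDerivAt_pow 2 s).div_const 8
        refine this.congr_deriv ?_
        simp [pow_one]; ring
      exact h4.add h5
    exact h3.sub h2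
  have hφmono : Monotone φ := by
    refine monotone_of_deriv_nonneg (fun s => (hφd s).differentiableAt) (fun s => ?_)
    rw [(hφd s).deriv]
    have hA : 0 ≤ p * Real.exp s := mul_nonneg hp0 (Real.exp_pos s).le
    have hB := hpos s
    rw [sub_nonneg, div_le_iff₀ (by positivity)]
    nlinarith [sq_nonneg (1 - p - p * Real.exp s), Real.exp_pos s]
  have hφ0 : φ 0 = 0 := by simp [hφ]
  have hganti : AntitoneOn g (Set.Iic (0 : ℝ)) := by
    refine antitoneOn_of_deriv_nonpos (convex_Iic 0)
      (fun s _ => ((hgd s).differentiableAt).continuousAt.continuousWithinAt)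
      (fun s _ => ((hgd s).differentiableAt).differentiableWithinAt) (fun s hs => ?_)
    rw [(hgd s).deriv]
    have hs' : s ≤ 0 := le_of_lt (by simpa using hs)
    calc φ s ≤ φ 0 := hφmono hs'
    _ = 0 := hφ0
  have h0 : g 0 = 0 := by simp [hg]
  have hgt : 0 ≤ g t := by
    have := hganti (Set.mem_Iic.2 ht) (Set.mem_Iic.2 le_rfl) ht
    rw [h0] at this; exact this
  have hlog : Real.log (1 - p + p * Real.exp t) ≤ p * t + t ^ 2 / 8 := by
    simp only [hg] at hgt; linarith
  calc 1 - p + p * Real.exp t = Real.exp (Real.log (1 - p + p * Real.exp t)) :=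
        (Real.exp_log (hpos t)).symm
  _ ≤ Real.exp (p * t + t ^ 2 / 8) := Real.exp_le_exp.2 hlog

theorem empirical_quantile_upper
    {Ω : Type*} [MeasurableSpace Ω] (μ : Measure Ω) [IsProbabilityMeasure μ]
    (n : ℕ) (X : Fin n → Ω → ℝ) (hmeas : ∀ i, Measurable (X i))
    (D : Measure ℝ) [IsProbabilityMeasure D]
    (hindep : iIndepFun X μ)
    (hid : ∀ i, Measure.map (X i) μ = D)
    (γ β : ℝ) (hγ : γ ∈ Set.Ioo (0 : ℝ) (1 / 2)) (hβ : β ∈ Set.Ioo (0 : ℝ) 1)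
    (hn : (n : ℝ) ≥ (1 / (2 * γ ^ 2)) * Real.log (1 / β)) :
    μ {ω | popQuantile D (2 * γ) < empQuantile (fun i => X i ω) γ}
      ≤ ENNReal.ofReal β := by
  obtain ⟨hγ0, hγ2⟩ := hγ
  obtain ⟨hβ0, hβ1⟩ := hβ
  have hlogβ : 0 < Real.log (1 / β) := Real.log_pos (by rw [lt_div_iff₀ hβ0]; linarith)
  have hnpos : 0 < n := by
    rcases Nat.eq_zero_or_pos n with h | h
    · exfalso
      subst h
      have : (0:ℝ) < (1 / (2 * γ ^ 2)) * Real.log (1 / β) := by positivity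
      push_cast at hn
      linarith
    · exact h
  -- the population 2γ-quantile and its cdf value
  set q : ℝ := popQuantile D (2 * γ) with hq
  have hdistCdf : ∀ x, distCdf D x = cdf D x := fun x => (cdf_eq_real D x).symm
  set p : ℝ := cdf D q with hp
  have hp0 : 0 ≤ p := cdf_nonneg D q
  have hp1 : p ≤ 1 := cdf_le_one D q
  -- F(q) ≥ 2γ
  have hTset : {x : ℝ | 2 * γ ≤ distCdf D x} = {x : ℝ | 2 * γ ≤ cdf D x} := by
    simp only [hdistCdf]
  have hne : {x : ℝ | 2 * γ ≤ cdf D x}.Nonempty := by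
    have := (tendsto_cdf_atTop D).eventually (eventually_ge_nhds (show 2 * γ < 1 by linarith))
    exact this.exists
  have hbdd : BddBelow {x : ℝ | 2 * γ ≤ cdf D x} := by
    have := (tendsto_cdf_atBot D).eventually (eventually_lt_nhds (show (0:ℝ) < 2 * γ by linarith))
    obtain ⟨x₀, hx₀⟩ := this.exists
    refine ⟨x₀, fun y hy => ?_⟩
    by_contra h
    push_neg at h
    have := monotone_cdf D h.le
    simp only [Set.mem_setOf_eq] at hy
    linarith
  have hp2γ : 2 * γ ≤ p := by
    have hq' : q = sInf {x : ℝ | 2 * γ ≤ cdf D x} := by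
      rw [hq, popQuantile, hTset]
    have hgt : ∀ x, q < x → 2 * γ ≤ cdf D x := by
      intro x hx
      rw [hq'] at hx
      obtain ⟨y, hy, hyx⟩ := (csInf_lt_iff hbdd hne).mp hx
      exact hy.trans (monotone_cdf D hyx.le)
    have htend : Filter.Tendsto (cdf D) (nhdsWithin q (Set.Ioi q)) (nhds (cdf D q)) :=
      ((cdf D).right_continuous q).tendsto.mono_left
        (nhdsWithin_mono q Set.Ioi_subset_Ici_self)
    exact ge_of_tendsto htend (eventually_mem_nhdsWithin.mono fun x hx => hgt x hx)
  -- indicator variables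
  set Y : Fin n → Ω → ℝ := fun i ω => if X i ω ≤ q then 1 else 0 with hY
  have hYmeas : ∀ i, Measurable (Y i) := fun i =>
    Measurable.ite ((hmeas i) measurableSet_Iic) measurable_const measurable_const
  have hYindep : iIndepFun Y μ := by
    have := hindep.comp (g := fun _ (x : ℝ) => if x ≤ q then (1:ℝ) else 0)
      (fun i => Measurable.ite measurableSet_Iic measurable_const measurable_const)
    exact this
  -- event inclusion
  have hsub : {ω | popQuantile D (2 * γ) < empQuantile (fun i => X i ω) γ}
      ⊆ {ω | (∑ i, Y i) ω ≤ γ * n} := by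
    intro ω hω
    simp only [Set.mem_setOf_eq] at hω ⊢
    rw [Finset.sum_apply]
    have hsum : (∑ i, Y i ω)
        = ((Finset.univ.filter (fun i => X i ω ≤ q)).card : ℝ) := by
      simp [hY, Finset.sum_boole]
    rw [hsum]
    by_contra h
    push_neg at h
    have hqmem : q ∈ {x : ℝ | γ * (n : ℝ)
        ≤ ((Finset.univ.filter (fun i => X i ω ≤ x)).card : ℝ)} := le_of_lt h
    have hbdd' : BddBelow {x : ℝ | γ * (n : ℝ)
        ≤ ((Finset.univ.filter (fun i => X i ω ≤ x)).card : ℝ)} := by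
      have hnnem : (Finset.univ : Finset (Fin n)).Nonempty :=
        ⟨⟨0, hnpos⟩, Finset.mem_univ _⟩
      refine ⟨Finset.univ.inf' hnnem (fun i => X i ω), fun x hx => ?_⟩
      simp only [Set.mem_setOf_eq] at hx
      have hcard : 0 < (Finset.univ.filter (fun i => X i ω ≤ x)).card := by
        by_contra hc
        push_neg at hc
        have : (Finset.univ.filter (fun i => X i ω ≤ x)).card = 0 := by omega
        rw [this] at hx
        have : (0:ℝ) < γ * n := by positivity
        simp at hx; linarith
      obtain ⟨i, hi⟩ := Finset.card_pos.mp hcard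
      simp only [Finset.mem_filter] at hi
      exact (Finset.inf'_le _ (Finset.mem_univ i)).trans hi.2
    have : empQuantile (fun i => X i ω) γ ≤ q := csInf_le hbdd' hqmem
    linarith
  -- Chernoff bound
  set t : ℝ := -(4 * γ) with htdef
  have ht : t ≤ 0 := by rw [htdef]; linarith
  have hμpre : ∀ i, μ (X i ⁻¹' Set.Iic q) = D (Set.Iic q) := fun i => by
    rw [← hid i, Measure.map_apply (hmeas i) measurableSet_Iic]
  have hpD : p = (D (Set.Iic q)).toReal := by rw [hp, cdf_eq_real, measureReal_def]
  have hYint : ∀ i, Integrable (Y i) μ := by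
    intro i
    have : Y i = Set.indicator (X i ⁻¹' Set.Iic q) (fun _ => (1:ℝ)) := by
      funext ω
      by_cases h : X i ω ≤ q <;> simp [hY, h, Set.indicator, Set.mem_preimage, Set.mem_Iic]
    rw [this]
    exact (integrable_const (1:ℝ)).indicator ((hmeas i) measurableSet_Iic)
  have hEY : ∀ i, ∫ ω, Y i ω ∂μ = p := by
    intro i
    have : Y i = Set.indicator (X i ⁻¹' Set.Iic q) (fun _ => (1:ℝ)) := by
      funext ω
      by_cases h : X i ω ≤ q <;> simp [hY, h, Set.indicator, Set.mem_preimage, Set.mem_Iic]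
    rw [this, integral_indicator_const _ ((hmeas i) measurableSet_Iic), measureReal_def, hμpre i, hpD]
    simp
  have hexpY : ∀ i, (fun ω => Real.exp (t * Y i ω))
      = fun ω => 1 + (Real.exp t - 1) * Y i ω := by
    intro i
    funext ω
    by_cases h : X i ω ≤ q <;> simp [hY, h]
  have h_int : ∀ i, Integrable (fun ω => Real.exp (t * Y i ω)) μ := by
    intro i
    rw [hexpY i]
    exact (integrable_const (1:ℝ)).add ((hYint i).const_mul _)
  have hmgfY : ∀ i, mgf (Y i) μ t = 1 - p + p * Real.exp t := by
    intro i
    rw [mgf, hexpY i,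
      integral_add (integrable_const (1:ℝ)) ((hYint i).const_mul _),
      integral_const_mul, hEY i, integral_const]
    simp
    ring
  have h_int_sum : Integrable (fun ω => Real.exp (t * (∑ i, Y i) ω)) μ :=
    hYindep.integrable_exp_mul_sum hYmeas (fun i _ => h_int i)
  have hcher := measure_le_le_exp_mul_mgf (X := ∑ i, Y i) (μ := μ) (γ * n) ht h_int_sum
  have hmgfsum : mgf (∑ i, Y i) μ t = (1 - p + p * Real.exp t) ^ n := by
    rw [hYindep.mgf_sum hYmeas]
    simp [hmgfY]
  rw [hmgfsum] at hcher
  -- numeric bound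
  have hbound : Real.exp (-t * (γ * n)) * (1 - p + p * Real.exp t) ^ n ≤ β := by
    have h1 : (1 - p + p * Real.exp t) ^ n ≤ Real.exp (p * t + t ^ 2 / 8) ^ n := by
      apply pow_le_pow_left₀ (bern_h_pos p hp0 hp1 t).le (bern_mgf_bound p t hp0 hp1 ht)
    have h2 : Real.exp (-t * (γ * n)) * (1 - p + p * Real.exp t) ^ n
        ≤ Real.exp (-t * (γ * n)) * Real.exp (p * t + t ^ 2 / 8) ^ n := by
      apply mul_le_mul_of_nonneg_left h1 (Real.exp_pos _).le
    have h3 : Real.exp (-t * (γ * n)) * Real.exp (p * t + t ^ 2 / 8) ^ n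
        = Real.exp (-t * (γ * n) + n * (p * t + t ^ 2 / 8)) := by
      rw [← Real.exp_nat_mul, ← Real.exp_add]
    have hexp : -t * (γ * n) + n * (p * t + t ^ 2 / 8) ≤ Real.log β := by
      have hlog' : Real.log (1 / β) = -Real.log β := by
        rw [one_div, Real.log_inv]
      rw [hlog'] at hn
      have hγ2pos : (0:ℝ) < 2 * γ ^ 2 := by positivity
      have hn' : -Real.log β ≤ (n : ℝ) * (2 * γ ^ 2) := by
        calc -Real.log β = (1 / (2 * γ ^ 2) * -Real.log β) * (2 * γ ^ 2) := by
              field_simp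
        _ ≤ (n : ℝ) * (2 * γ ^ 2) :=
              mul_le_mul_of_nonneg_right hn hγ2pos.le
      have hnn : (0:ℝ) ≤ (n:ℝ) := Nat.cast_nonneg n
      have hkey : -t * (γ * n) + n * (p * t + t ^ 2 / 8) ≤ -(2 * n * γ ^ 2) := by
        rw [htdef]
        have : (n:ℝ) * γ * p ≥ (n:ℝ) * γ * (2 * γ) := by
          apply mul_le_mul_of_nonneg_left hp2γ (by positivity)
        nlinarith
      linarith
    calc Real.exp (-t * (γ * n)) * (1 - p + p * Real.exp t) ^ n
        ≤ Real.exp (-t * (γ * n) + n * (p * t + t ^ 2 / 8)) := by rw [← h3]; exact h2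
    _ ≤ Real.exp (Real.log β) := Real.exp_le_exp.2 hexp
    _ = β := Real.exp_log hβ0
  -- conclude
  have hfinal : (μ {ω | popQuantile D (2 * γ) < empQuantile (fun i => X i ω) γ}).toReal
      ≤ β := by
    calc (μ {ω | popQuantile D (2 * γ) < empQuantile (fun i => X i ω) γ}).toReal
        ≤ (μ {ω | (∑ i, Y i) ω ≤ γ * n}).toReal :=
          ENNReal.toReal_mono (measure_ne_top μ _) (measure_mono hsub)
    _ ≤ Real.exp (-t * (γ * n)) * (1 - p + p * Real.exp t) ^ n := hcher
    _ ≤ β := hbound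
  rw [ENNReal.le_ofReal_iff_toReal_le (measure_ne_top μ _) hβ0.le]
  exact hfinal
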